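/- The improper integral over the real line of the complex rational function x ↦ (−7i + 26x + 15ix²)/((x−i)⁵(x+i)³) equals (55/16)πi; equivalently, −i times this integral equals 55π/16. -/

import Mathlib

open Complex MeasureTheory Filter Topology

private lemma hsub_ne (x : ℝ) : ((x:ℂ) - I) ≠ 0 := by
  intro h; have := congrArg Complex.im h; simp at this

private lemma hadd_ne (x : ℝ) : ((x:ℂ) + I) ≠ 0 := by
  intro h; have := congrArg Complex.im h; simp at this

private lemma hone_ne (x : ℝ) : (1 + (x:ℂ)^2) ≠ 0 := by
  have e : ((x:ℂ)-I)*((x:ℂ)+I) = 1 + (x:ℂ)^2 := by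
    linear_combination (-1 : ℂ) * Complex.I_sq
  rw [← e]; exact mul_ne_zero (hsub_ne x) (hadd_ne x)

private lemma inv_tendsto (l : Filter ℝ) (hl : Tendsto (fun x:ℝ => |x|) l atTop) (c : ℂ)
    (hc : c.re = 0) : Tendsto (fun x:ℝ => ((x:ℂ)+c)⁻¹) l (𝓝 0) := by
  apply squeeze_zero_norm' (a := fun x:ℝ => |x|⁻¹) _ (tendsto_inv_atTop_zero.comp hl)
  filter_upwards [hl.eventually_ge_atTop 1] with x hx
  rw [norm_inv]
  apply inv_anti₀ (by linarith)
  calc |x| = |((x:ℂ)+c).re| := by simp [hc]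
    _ ≤ ‖(x:ℂ)+c‖ := Complex.abs_re_le_norm _
    _ = ‖(x:ℂ)+c‖ := rfl

private noncomputable def RR (x : ℝ) : ℂ :=
  23*I/16 / ((x:ℂ) - I) + 3/16 / ((x:ℂ) - I)^2
  + 5*I/12 / ((x:ℂ) - I)^3 + 1/8 / ((x:ℂ) - I)^4
  + 2*I / ((x:ℂ) + I) + (-3/4) / ((x:ℂ) + I)^2

private lemma RR_tendsto (l : Filter ℝ) (hl : Tendsto (fun x:ℝ => |x|) l atTop) :
    Tendsto RR l (𝓝 0) := by
  have h1 : Tendsto (fun x:ℝ => ((x:ℂ) - I)⁻¹) l (𝓝 0) := by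
    simpa [← sub_eq_add_neg] using inv_tendsto l hl (-I) (by simp)
  have h2 : Tendsto (fun x:ℝ => ((x:ℂ) + I)⁻¹) l (𝓝 0) := inv_tendsto l hl I (by simp)
  have := (((((h1.const_mul (23*I/16)).add ((h1.pow 2).const_mul (3/16))).add
      ((h1.pow 3).const_mul (5*I/12))).add ((h1.pow 4).const_mul (1/8))).add
      (h2.const_mul (2*I))).add ((h2.pow 2).const_mul (-3/4))
  unfold RR
  simpa [div_eq_mul_inv, inv_pow, mul_comm] using this

set_option maxHeartbeats 2000000 in
private lemma key_id (x : ℝ) :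
    (-7 * I + 26 * (x:ℂ) + 15 * I * (x:ℂ) ^ 2) / (((x:ℂ) - I) ^ 5 * ((x:ℂ) + I) ^ 3)
      - 55*I/16 * (1 + (x:ℂ)^2)⁻¹
    = -(23*I/16)/((x:ℂ)-I)^2 + -(3/8)/((x:ℂ)-I)^3 + -(5*I/4)/((x:ℂ)-I)^4 + -(1/2)/((x:ℂ)-I)^5
      + -(2*I)/((x:ℂ)+I)^2 + (3/2)/((x:ℂ)+I)^3 := by
  have h1 := hsub_ne x
  have h2 := hadd_ne x
  have hD : (((x:ℂ)-I)^5 * ((x:ℂ)+I)^3) ≠ 0 :=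
    mul_ne_zero (pow_ne_zero _ h1) (pow_ne_zero _ h2)
  apply mul_right_cancel₀ hD
  have t0 : (-7 * I + 26 * (x:ℂ) + 15 * I * (x:ℂ) ^ 2) / (((x:ℂ) - I) ^ 5 * ((x:ℂ) + I) ^ 3)
      * (((x:ℂ)-I)^5 * ((x:ℂ)+I)^3) = (-7 * I + 26 * (x:ℂ) + 15 * I * (x:ℂ) ^ 2) :=
    div_mul_cancel₀ _ hD
  have tL2 : (55*I/16 * (1 + (x:ℂ)^2)⁻¹) * (((x:ℂ)-I)^5 * ((x:ℂ)+I)^3)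
      = 55*I/16 * (((x:ℂ)-I)^4*((x:ℂ)+I)^2) := by
    have e : (1 + (x:ℂ)^2) = ((x:ℂ)-I)*((x:ℂ)+I) := by linear_combination Complex.I_sq
    rw [e]; field_simp
  have t1 : (-(23*I/16)/((x:ℂ)-I)^2) * (((x:ℂ)-I)^5 * ((x:ℂ)+I)^3)
      = -(23*I/16) * (((x:ℂ)-I)^3*((x:ℂ)+I)^3) := by field_simp
  have t2 : (-((3:ℂ)/8)/((x:ℂ)-I)^3) * (((x:ℂ)-I)^5 * ((x:ℂ)+I)^3)
      = -(3/8) * (((x:ℂ)-I)^2*((x:ℂ)+I)^3) := by field_simp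
  have t3 : (-(5*I/4)/((x:ℂ)-I)^4) * (((x:ℂ)-I)^5 * ((x:ℂ)+I)^3)
      = -(5*I/4) * (((x:ℂ)-I)*((x:ℂ)+I)^3) := by field_simp
  have t4 : (-((1:ℂ)/2)/((x:ℂ)-I)^5) * (((x:ℂ)-I)^5 * ((x:ℂ)+I)^3)
      = -(1/2) * ((x:ℂ)+I)^3 := by field_simp
  have t5 : (-(2*I)/((x:ℂ)+I)^2) * (((x:ℂ)-I)^5 * ((x:ℂ)+I)^3)
      = -(2*I) * (((x:ℂ)-I)^5*((x:ℂ)+I)) := by field_simp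
  have t6 : (((3:ℂ)/2)/((x:ℂ)+I)^3) * (((x:ℂ)-I)^5 * ((x:ℂ)+I)^3)
      = (3/2) * ((x:ℂ)-I)^5 := by field_simp
  linear_combination t0 - tL2 - t1 - t2 - t3 - t4 - t5 - t6 +
    ((26 : ℂ) * (x:ℂ) + (1/2 : ℂ) * (x:ℂ)^3 + (-9/8 : ℂ) * (x:ℂ)^5 + (-7 : ℂ) * Complex.I
      + (33/2 : ℂ) * (x:ℂ)^2 * Complex.I + (73/8 : ℂ) * (x:ℂ)^4 * Complex.I
      + (-49/2 : ℂ) * (x:ℂ) * Complex.I^2 + (-55/4 : ℂ) * (x:ℂ)^3 * Complex.I^2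
      + (15/2 : ℂ) * Complex.I^3 + (-9/4 : ℂ) * (x:ℂ)^2 * Complex.I^3
      + (119/8 : ℂ) * (x:ℂ) * Complex.I^4 + (-55/8 : ℂ) * Complex.I^5) * Complex.I_sq

set_option maxHeartbeats 1000000 in
private lemma RR_deriv (x : ℝ) : HasDerivAt RR
    ((-7 * I + 26 * (x:ℂ) + 15 * I * (x:ℂ) ^ 2) / (((x:ℂ) - I) ^ 5 * ((x:ℂ) + I) ^ 3)
      - 55*I/16 * (1 + (x:ℂ)^2)⁻¹) x := by
  have hv : HasDerivAt (fun w:ℂ => w - I) 1 (x:ℂ) := (hasDerivAt_id _).sub_const I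
  have hw : HasDerivAt (fun w:ℂ => w + I) 1 (x:ℂ) := (hasDerivAt_id _).add_const I
  have h1 := hsub_ne x
  have h2 := hadd_ne x
  have T1 : HasDerivAt (fun w:ℂ => 23*I/16 / (w - I)) (-(23*I/16)/((x:ℂ)-I)^2) (x:ℂ) := by
    refine ((hasDerivAt_const (x:ℂ) (23*I/16)).div hv h1).congr_deriv ?_
    field_simp
    ring
  have T2 : HasDerivAt (fun w:ℂ => 3/16 / (w - I)^2) (-((3:ℂ)/8)/((x:ℂ)-I)^3) (x:ℂ) := by
    refine ((hasDerivAt_const (x:ℂ) (3/16)).div (hv.pow 2) (pow_ne_zero 2 h1)).congr_deriv ?_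
    simp only [Pi.pow_apply]
    field_simp
    ring
  have T3 : HasDerivAt (fun w:ℂ => 5*I/12 / (w - I)^3) (-(5*I/4)/((x:ℂ)-I)^4) (x:ℂ) := by
    refine ((hasDerivAt_const (x:ℂ) (5*I/12)).div (hv.pow 3) (pow_ne_zero 3 h1)).congr_deriv ?_
    simp only [Pi.pow_apply]
    field_simp
    ring
  have T4 : HasDerivAt (fun w:ℂ => 1/8 / (w - I)^4) (-((1:ℂ)/2)/((x:ℂ)-I)^5) (x:ℂ) := by
    refine ((hasDerivAt_const (x:ℂ) (1/8)).div (hv.pow 4) (pow_ne_zero 4 h1)).congr_deriv ?_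
    simp only [Pi.pow_apply]
    field_simp
    ring
  have T5 : HasDerivAt (fun w:ℂ => 2*I / (w + I)) (-(2*I)/((x:ℂ)+I)^2) (x:ℂ) := by
    refine ((hasDerivAt_const (x:ℂ) (2*I)).div hw h2).congr_deriv ?_
    field_simp
    ring
  have T6 : HasDerivAt (fun w:ℂ => (-3/4 : ℂ) / (w + I)^2) (((3:ℂ)/2)/((x:ℂ)+I)^3) (x:ℂ) := by
    refine ((hasDerivAt_const (x:ℂ) (-3/4)).div (hw.pow 2) (pow_ne_zero 2 h2)).congr_deriv ?_
    simp only [Pi.pow_apply]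
    field_simp
    ring
  have Hsum := ((((T1.add T2).add T3).add T4).add T5).add T6
  rw [key_id x]
  exact Hsum.comp_ofReal

private lemma f_bound (x : ℝ) :
    ‖(-7 * I + 26 * (x:ℂ) + 15 * I * (x:ℂ) ^ 2) / (((x:ℂ) - I) ^ 5 * ((x:ℂ) + I) ^ 3)‖
      ≤ 48 * (1+x^2)⁻¹ := by
  have ha1 : 1 ≤ ‖(x:ℂ)-I‖ := by
    calc (1:ℝ) = |((x:ℂ)-I).im| := by simp
      _ ≤ ‖(x:ℂ)-I‖ := Complex.abs_im_le_norm _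
      _ = ‖(x:ℂ)-I‖ := rfl
  have hb1 : 1 ≤ ‖(x:ℂ)+I‖ := by
    calc (1:ℝ) = |((x:ℂ)+I).im| := by simp
      _ ≤ ‖(x:ℂ)+I‖ := Complex.abs_im_le_norm _
      _ = ‖(x:ℂ)+I‖ := rfl
  have hab : ‖(x:ℂ)-I‖ * ‖(x:ℂ)+I‖ = 1 + x^2 := by
    rw [← norm_mul]
    have e : ((x:ℂ)-I)*((x:ℂ)+I) = ((1+x^2 : ℝ) : ℂ) := by
      push_cast; linear_combination (-1:ℂ)*Complex.I_sq
    rw [e, Complex.norm_real, Real.norm_eq_abs, _root_.abs_of_nonneg (by positivity)]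
  have hN : ‖-7 * I + 26 * (x:ℂ) + 15 * I * (x:ℂ) ^ 2‖ ≤ 48 * (1+x^2)^2 := by
    calc ‖-7 * I + 26 * (x:ℂ) + 15 * I * (x:ℂ) ^ 2‖
        ≤ ‖-7 * I + 26 * (x:ℂ)‖ + ‖15 * I * (x:ℂ)^2‖ := norm_add_le _ _
      _ ≤ (‖(-7 : ℂ) * I‖ + ‖26 * (x:ℂ)‖) + ‖15 * I * (x:ℂ)^2‖ :=
          add_le_add_left (norm_add_le _ _) _
      _ = 7 + 26 * |x| + 15 * x^2 := by
          rw [show (-7 * I : ℂ) = -(7 * I) by ring, norm_neg, norm_mul, norm_mul, norm_mul,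
            norm_mul, norm_pow, Complex.norm_I, Complex.norm_real, Real.norm_eq_abs,
            _root_.sq_abs]
          norm_num
      _ ≤ 48 * (1+x^2)^2 := by nlinarith [sq_nonneg (|x| - 1), _root_.sq_abs x, abs_nonneg x, sq_nonneg x, sq_nonneg (x^2)]
  have hden : (1+x^2)^3 ≤ ‖(x:ℂ)-I‖^5 * ‖(x:ℂ)+I‖^3 := by
    calc (1+x^2)^3 = (‖(x:ℂ)-I‖ * ‖(x:ℂ)+I‖)^3 := by rw [hab]
      _ ≤ (‖(x:ℂ)-I‖ * ‖(x:ℂ)+I‖)^3 * ‖(x:ℂ)-I‖^2 := by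
          apply le_mul_of_one_le_right (by positivity)
          nlinarith
      _ = ‖(x:ℂ)-I‖^5 * ‖(x:ℂ)+I‖^3 := by ring
  calc ‖(-7 * I + 26 * (x:ℂ) + 15 * I * (x:ℂ) ^ 2) / (((x:ℂ) - I) ^ 5 * ((x:ℂ) + I) ^ 3)‖
      = ‖-7 * I + 26 * (x:ℂ) + 15 * I * (x:ℂ) ^ 2‖ / (‖(x:ℂ)-I‖^5 * ‖(x:ℂ)+I‖^3) := by
        rw [norm_div, norm_mul, norm_pow, norm_pow]
    _ ≤ (48 * (1+x^2)^2) / ((1+x^2)^3) :=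
        div_le_div₀ (by positivity) hN (by positivity) hden
    _ = 48 * (1+x^2)⁻¹ := by
        have : (0:ℝ) < 1 + x^2 := by positivity
        field_simp

private lemma f_integrable : Integrable (fun x:ℝ =>
    (-7 * I + 26 * (x:ℂ) + 15 * I * (x:ℂ) ^ 2) / (((x:ℂ) - I) ^ 5 * ((x:ℂ) + I) ^ 3)) := by
  apply Integrable.mono' (integrable_inv_one_add_sq.const_mul 48)
  · apply Continuous.aestronglyMeasurable
    apply Continuous.div (by fun_prop) (by fun_prop)
    exact fun x => mul_ne_zero (pow_ne_zero _ (hsub_ne x)) (pow_ne_zero _ (hadd_ne x))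
  · exact ae_of_all _ f_bound

private lemma g_eq : (fun x:ℝ => 55*I/16 * (1 + (x:ℂ)^2)⁻¹)
    = fun x:ℝ => 55*I/16 * ((((1+x^2)⁻¹ : ℝ)) : ℂ) := by
  funext x
  push_cast
  ring

private lemma g_integrable : Integrable (fun x:ℝ => 55*I/16 * (1 + (x:ℂ)^2)⁻¹) := by
  rw [g_eq]
  exact (integrable_inv_one_add_sq.ofReal).const_mul _

private lemma g_integral : ∫ x:ℝ, 55*I/16 * (1 + (x:ℂ)^2)⁻¹ = 55*I/16 * (Real.pi : ℂ) := by
  rw [g_eq, MeasureTheory.integral_const_mul,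
    show ((↑) : ℝ → ℂ) = RCLike.ofReal from rfl, integral_ofReal,
    integral_univ_inv_one_add_sq]

theorem integral_case_c :
    (∫ x : ℝ, ((-7 * I + 26 * x + 15 * I * x ^ 2) /
        ((x - I) ^ 5 * (x + I) ^ 3) : ℂ) = ((55 : ℂ) / 16) * (Real.pi : ℂ) * I) ∧
    -I * (∫ x : ℝ, ((-7 * I + 26 * x + 15 * I * x ^ 2) /
        ((x - I) ^ 5 * (x + I) ^ 3) : ℂ)) = ((55 : ℂ) / 16) * (Real.pi : ℂ) := by
  have hfg : Integrable (fun x:ℝ => (-7 * I + 26 * (x:ℂ) + 15 * I * (x:ℂ) ^ 2) /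
      (((x:ℂ) - I) ^ 5 * ((x:ℂ) + I) ^ 3) - 55*I/16 * (1 + (x:ℂ)^2)⁻¹) :=
    f_integrable.sub g_integrable
  have hzero : ∫ x:ℝ, ((-7 * I + 26 * (x:ℂ) + 15 * I * (x:ℂ) ^ 2) /
      (((x:ℂ) - I) ^ 5 * ((x:ℂ) + I) ^ 3) - 55*I/16 * (1 + (x:ℂ)^2)⁻¹) = 0 - 0 :=
    integral_of_hasDerivAt_of_tendsto RR_deriv hfg
      (RR_tendsto atBot Filter.tendsto_abs_atBot_atTop)
      (RR_tendsto atTop Filter.tendsto_abs_atTop_atTop)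
  have key : (∫ x : ℝ, ((-7 * I + 26 * x + 15 * I * x ^ 2) /
      ((x - I) ^ 5 * (x + I) ^ 3) : ℂ)) = ((55 : ℂ) / 16) * (Real.pi : ℂ) * I := by
    have split : (fun x:ℝ => ((-7 * I + 26 * (x:ℂ) + 15 * I * (x:ℂ) ^ 2) /
        (((x:ℂ) - I) ^ 5 * ((x:ℂ) + I) ^ 3)))
        = fun x:ℝ => ((-7 * I + 26 * (x:ℂ) + 15 * I * (x:ℂ) ^ 2) /
        (((x:ℂ) - I) ^ 5 * ((x:ℂ) + I) ^ 3) - 55*I/16 * (1 + (x:ℂ)^2)⁻¹)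
          + 55*I/16 * (1 + (x:ℂ)^2)⁻¹ := by
      funext x; ring
    rw [split, integral_add hfg g_integrable, hzero, g_integral]
    ring
  refine ⟨key, ?_⟩
  rw [key]
  linear_combination (-(55:ℂ)/16*(Real.pi:ℂ)) * Complex.I_sq
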